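/- Define s : (Fin (N−1) → ℝ) → ℝ by s(x) = max_i x_i if max_i x_i + min_i x_i ≥ 0, and s(x) = min_i x_i otherwise (so that s(x) is a coordinate of x with |s(x)| = max_i |x_i|). Let D = { x | ∀ i j, |x_i − x_j| ≤ ηΔ }, let ν be an N-node adversarial strategy with ν(D) = 1, and let κ be the pushforward of ν under s. Then PA_2(κ) = PA_N(ν), and if these are positive then MSE_2(κ) ≥ MSE_N(ν). -/

import Mathlib

open MeasureTheory ProbabilityTheory

noncomputable section

def midN (N : ℕ) (p : ℝ × (Fin (N-1) → ℝ)) : ℝ :=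
  (max p.1 (⨆ i, p.2 i) + min p.1 (⨅ i, p.2 i)) / 2

def accN (N : ℕ) (η Δ : ℝ) : Set (ℝ × (Fin (N-1) → ℝ)) :=
  {p | max p.1 (⨆ i, p.2 i) - min p.1 (⨅ i, p.2 i) ≤ η * Δ}

def PA_N (N : ℕ) (η Δ : ℝ) (μ : Measure ℝ) (ν : Measure (Fin (N-1) → ℝ)) : ℝ :=
  ((μ.prod ν) (accN N η Δ)).toReal

def MSE_N (N : ℕ) (η Δ : ℝ) (μ : Measure ℝ) (ν : Measure (Fin (N-1) → ℝ)) : ℝ :=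
  ∫ p, (midN N p) ^ 2 ∂((μ.prod ν)[|accN N η Δ])

def mid2 (p : ℝ × ℝ) : ℝ := (max p.1 p.2 + min p.1 p.2) / 2

def acc2 (η Δ : ℝ) : Set (ℝ × ℝ) := {p | max p.1 p.2 - min p.1 p.2 ≤ η * Δ}

def PA_2 (η Δ : ℝ) (μ κ : Measure ℝ) : ℝ := ((μ.prod κ) (acc2 η Δ)).toReal

def MSE_2 (η Δ : ℝ) (μ κ : Measure ℝ) : ℝ :=
  ∫ p, (mid2 p) ^ 2 ∂((μ.prod κ)[|acc2 η Δ])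

def cN (N : ℕ) (η Δ : ℝ) (μ : Measure ℝ) (α : ℝ) : ℝ :=
  sSup {r | ∃ ν : Measure (Fin (N-1) → ℝ), IsProbabilityMeasure ν ∧
    α ≤ PA_N N η Δ μ ν ∧ r = MSE_N N η Δ μ ν}

def c2 (η Δ : ℝ) (μ : Measure ℝ) (α : ℝ) : ℝ :=
  sSup {r | ∃ κ : Measure ℝ, IsProbabilityMeasure κ ∧
    α ≤ PA_2 η Δ μ κ ∧ r = MSE_2 η Δ μ κ}

def IsBestResponseN (N : ℕ) (η Δ : ℝ) (μ : Measure ℝ) (QAD : ℝ → ℝ → ℝ)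
    (ν : Measure (Fin (N-1) → ℝ)) : Prop :=
  IsProbabilityMeasure ν ∧ 0 < PA_N N η Δ μ ν ∧
    ∀ ν' : Measure (Fin (N-1) → ℝ), IsProbabilityMeasure ν' → 0 < PA_N N η Δ μ ν' →
      QAD (MSE_N N η Δ μ ν') (PA_N N η Δ μ ν') ≤ QAD (MSE_N N η Δ μ ν) (PA_N N η Δ μ ν)

def IsBestResponse2 (η Δ : ℝ) (μ : Measure ℝ) (QAD : ℝ → ℝ → ℝ) (κ : Measure ℝ) : Prop :=
  IsProbabilityMeasure κ ∧ 0 < PA_2 η Δ μ κ ∧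
    ∀ κ' : Measure ℝ, IsProbabilityMeasure κ' → 0 < PA_2 η Δ μ κ' →
      QAD (MSE_2 η Δ μ κ') (PA_2 η Δ μ κ') ≤ QAD (MSE_2 η Δ μ κ) (PA_2 η Δ μ κ)

/-- The adversarial report of maximal absolute value: the max coordinate if
`max + min ≥ 0`, and the min coordinate otherwise. -/
def selFun (N : ℕ) (x : Fin (N-1) → ℝ) : ℝ :=
  if 0 ≤ (⨆ i, x i) + (⨅ i, x i) then ⨆ i, x i else ⨅ i, x i


private lemma aux_max_add_min (a b : ℝ) : max a b + min a b = a + b := by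
  rcases le_total a b with h | h <;>
    simp [max_eq_right, max_eq_left, min_eq_left, min_eq_right, h] <;> ring

private lemma key_mid (n M m : ℝ) (hmM : m ≤ M) :
    ((max n M + min n m) / 2) ^ 2 ≤ ((n + (if 0 ≤ M + m then M else m)) / 2) ^ 2 := by
  split_ifs with h
  · rcases le_total n m with h1 | h1
    · rw [max_eq_right (h1.trans hmM), min_eq_left h1]; nlinarith
    · rw [min_eq_right h1]
      rcases le_total n M with h2 | h2
      · rw [max_eq_right h2]
        nlinarith [mul_nonneg (sub_nonneg.2 h1) (show (0:ℝ) ≤ n + 2*M + m by linarith)]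
      · rw [max_eq_left h2]
        nlinarith [mul_nonneg (sub_nonneg.2 hmM) (show (0:ℝ) ≤ 2*n + M + m by linarith)]
  · push_neg at h
    rcases le_total n m with h1 | h1
    · rw [max_eq_right (h1.trans hmM), min_eq_left h1]
      nlinarith [mul_nonneg (sub_nonneg.2 hmM) (show (0:ℝ) ≤ -(2*n + m + M) by linarith)]
    · rw [min_eq_right h1]
      rcases le_total n M with h2 | h2
      · have h3 : (0:ℝ) ≤ -(M + n + 2*m) := by linarith
        rw [max_eq_right h2]
        nlinarith [mul_nonneg (sub_nonneg.2 h2) h3]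
      · rw [max_eq_left h2]

private lemma key_acc {η Δ : ℝ} (hΔ : 0 < Δ) (hη : 2 ≤ η) (n M m : ℝ) (hmM : m ≤ M)
    (hn : -Δ ≤ n) (hn' : n ≤ Δ) (hd : M - m ≤ η * Δ) :
    (max n M - min n m ≤ η * Δ ↔
      max n (if 0 ≤ M + m then M else m) - min n (if 0 ≤ M + m then M else m) ≤ η * Δ) := by
  have h2Δ : 2 * Δ ≤ η * Δ := by nlinarith
  split_ifs with h
  · constructor
    · intro H
      have := min_le_min (le_refl n) hmM
      linarith
    · intro H
      have hkey : n - m ≤ η * Δ ∧ M - n ≤ η * Δ := by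
        constructor
        · rcases le_total n M with h2 | h2
          · linarith
          · linarith
        · have := le_max_right n M
          have := min_le_left n M
          linarith
      rcases max_cases n M with ⟨e, _⟩ | ⟨e, _⟩ <;> rcases min_cases n m with ⟨e2, _⟩ | ⟨e2, _⟩ <;>
        rw [e, e2] <;> first
          | linarith [hkey.1, hkey.2]
          | nlinarith [hkey.1, hkey.2]
  · push_neg at h
    constructor
    · intro H
      have := max_le_max (le_refl n) hmM
      linarith
    · intro H
      have hkey : n - m ≤ η * Δ ∧ M - n ≤ η * Δ := by
        constructor
        · have := le_max_left n m
          have := min_le_right n m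
          linarith
        · rcases le_total n m with h2 | h2
          · linarith
          · linarith
      rcases max_cases n M with ⟨e, _⟩ | ⟨e, _⟩ <;> rcases min_cases n m with ⟨e2, _⟩ | ⟨e2, _⟩ <;>
        rw [e, e2] <;> first
          | linarith [hkey.1, hkey.2]
          | nlinarith [hkey.1, hkey.2]

private lemma key_bound {η Δ : ℝ} (hΔ : 0 < Δ) (n M m s : ℝ) (hn : -Δ ≤ n) (hn' : n ≤ Δ)
    (hms : m ≤ s) (hsM : s ≤ M) (hacc : max n M - min n m ≤ η * Δ) :
    ((n + s) / 2) ^ 2 ≤ ((2 * Δ + η * Δ) / 2) ^ 2 := by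
  have h1 : n - s ≤ η * Δ := by
    have := le_max_left n M
    have := min_le_right n m
    linarith
  have h2 : s - n ≤ η * Δ := by
    have := le_max_right n M
    have := min_le_left n m
    linarith
  apply sq_le_sq' <;> linarith

theorem stmt5 {N : ℕ} (hN : 2 ≤ N) {η Δ : ℝ} (hΔ : 0 < Δ) (hη : 2 ≤ η)
    (μ : Measure ℝ) [IsProbabilityMeasure μ] (hμ : μ (Set.Icc (-Δ) Δ) = 1)
    (ν : Measure (Fin (N-1) → ℝ)) [IsProbabilityMeasure ν]
    (hD : ν {x | ∀ i j, |x i - x j| ≤ η * Δ} = 1)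
    (κ : Measure ℝ) (hκ : κ = ν.map (selFun N)) :
    PA_2 η Δ μ κ = PA_N N η Δ μ ν ∧
      (0 < PA_N N η Δ μ ν → MSE_N N η Δ μ ν ≤ MSE_2 η Δ μ κ) := by
  haveI : Nonempty (Fin (N-1)) := ⟨⟨0, by omega⟩⟩
  -- basic facts about sup/inf over coordinates
  have hbdd : ∀ x : Fin (N-1) → ℝ, (⨅ i, x i) ≤ ⨆ i, x i := fun x =>
    le_trans (ciInf_le (Set.finite_range x).bddBelow (Classical.arbitrary _))
      (le_ciSup (Set.finite_range x).bddAbove (Classical.arbitrary _))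
  have hdiff : ∀ x : Fin (N-1) → ℝ, (∀ i j, |x i - x j| ≤ η * Δ) →
      (⨆ i, x i) - (⨅ i, x i) ≤ η * Δ := by
    intro x hx
    have h1 : ∀ i, x i - η * Δ ≤ ⨅ j, x j := fun i =>
      le_ciInf fun j => by have := (abs_le.mp (hx i j)).2; linarith
    have h2 : (⨆ i, x i) ≤ η * Δ + ⨅ j, x j := ciSup_le fun i => by linarith [h1 i]
    linarith
  have hselmem : ∀ x : Fin (N-1) → ℝ, (⨅ i, x i) ≤ selFun N x ∧ selFun N x ≤ ⨆ i, x i := by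
    intro x
    unfold selFun
    split_ifs
    · exact ⟨hbdd x, le_rfl⟩
    · exact ⟨le_rfl, hbdd x⟩
  -- measurability
  have hsupm : Measurable fun x : Fin (N-1) → ℝ => ⨆ i, x i :=
    Measurable.iSup fun i => measurable_pi_apply i
  have hinfm : Measurable fun x : Fin (N-1) → ℝ => ⨅ i, x i :=
    Measurable.iInf fun i => measurable_pi_apply i
  have hsm : Measurable (selFun N) :=
    Measurable.ite (measurableSet_le measurable_const (hsupm.add hinfm)) hsupm hinfm
  set T : ℝ × (Fin (N-1) → ℝ) → ℝ × ℝ := Prod.map id (selFun N) with hTdef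
  have hT : Measurable T := measurable_id.prodMap hsm
  have haccN : MeasurableSet (accN N η Δ) :=
    measurableSet_le ((measurable_fst.max (hsupm.comp measurable_snd)).sub
      (measurable_fst.min (hinfm.comp measurable_snd))) measurable_const
  have hacc2 : MeasurableSet (acc2 η Δ) :=
    measurableSet_le ((measurable_fst.max measurable_snd).sub
      (measurable_fst.min measurable_snd)) measurable_const
  have hDmeas : MeasurableSet {x : Fin (N-1) → ℝ | ∀ i j, |x i - x j| ≤ η * Δ} := by
    have : {x : Fin (N-1) → ℝ | ∀ i j, |x i - x j| ≤ η * Δ}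
        = ⋂ i, ⋂ j, {x | |x i - x j| ≤ η * Δ} := by
      ext x; simp [Set.mem_iInter]
    rw [this]
    exact MeasurableSet.iInter fun i => MeasurableSet.iInter fun j =>
      measurableSet_le ((measurable_pi_apply i).sub (measurable_pi_apply j)).abs
        measurable_const
  -- the a.e. good set
  have hG : ∀ᵐ p ∂(μ.prod ν),
      p.1 ∈ Set.Icc (-Δ) Δ ∧ ∀ i j, |p.2 i - p.2 j| ≤ η * Δ := by
    rw [ae_iff]
    apply measure_mono_null (t := (Set.Icc (-Δ) Δ)ᶜ ×ˢ (Set.univ : Set (Fin (N-1) → ℝ)) ∪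
      (Set.univ : Set ℝ) ×ˢ {x : Fin (N-1) → ℝ | ∀ i j, |x i - x j| ≤ η * Δ}ᶜ)
    · intro p hp
      simp only [Set.mem_setOf_eq, not_and_or] at hp
      rcases hp with hp | hp
      · exact Or.inl (by simp [hp])
      · exact Or.inr (by simp [hp])
    · refine measure_union_null ?_ ?_
      · rw [Measure.prod_prod]
        have : μ (Set.Icc (-Δ) Δ)ᶜ = 0 := by
          rw [measure_compl measurableSet_Icc (measure_ne_top _ _), hμ, measure_univ]
          simp
        simp [this]
      · rw [Measure.prod_prod]
        have : ν {x : Fin (N-1) → ℝ | ∀ i j, |x i - x j| ≤ η * Δ}ᶜ = 0 := by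
          rw [measure_compl hDmeas (measure_ne_top _ _), hD, measure_univ]
          simp
        simp [this]
  -- the two acceptance sets agree a.e.
  have hsets : T ⁻¹' (acc2 η Δ) =ᵐ[μ.prod ν] accN N η Δ := by
    rw [Filter.eventuallyEq_set]
    filter_upwards [hG] with p hp
    have hmM := hbdd p.2
    have hd := hdiff p.2 hp.2
    have hiff := key_acc hΔ hη p.1 (⨆ i, p.2 i) (⨅ i, p.2 i) hmM hp.1.1 hp.1.2 hd
    simp only [Set.mem_preimage, acc2, accN, Set.mem_setOf_eq, hTdef, Prod.map, id]
    exact (hiff.symm.trans Iff.rfl)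
  have hmap : μ.prod κ = (μ.prod ν).map T := by
    rw [hκ, hTdef, ← Measure.map_prod_map μ ν measurable_id hsm, Measure.map_id]
  have hPA : (μ.prod κ) (acc2 η Δ) = (μ.prod ν) (accN N η Δ) := by
    rw [hmap, Measure.map_apply hT hacc2, measure_congr hsets]
  constructor
  · unfold PA_2 PA_N
    rw [hPA]
  · intro hpos
    have hne : (μ.prod ν) (accN N η Δ) ≠ 0 := by
      intro h0
      unfold PA_N at hpos
      rw [h0] at hpos
      simp at hpos
    -- measurable integrands
    have hmid2m : Measurable mid2 :=
      ((measurable_fst.max measurable_snd).add (measurable_fst.min measurable_snd)).div_const 2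
    have hmidNm : Measurable (midN N) :=
      ((measurable_fst.max (hsupm.comp measurable_snd)).add
        (measurable_fst.min (hinfm.comp measurable_snd))).div_const 2
    have hres : (μ.prod κ).restrict (acc2 η Δ) = ((μ.prod ν).restrict (accN N η Δ)).map T := by
      rw [hmap, Measure.restrict_map hT hacc2, Measure.restrict_congr_set hsets]
    unfold MSE_N MSE_2 ProbabilityTheory.cond
    rw [integral_smul_measure, integral_smul_measure, hPA, hres,
      integral_map hT.aemeasurable ((hmid2m.pow_const 2).aestronglyMeasurable)]
    refine smul_le_smul_of_nonneg_left ?_ ENNReal.toReal_nonneg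
    -- integral inequality on the restricted measure
    have hptwise : ∀ p : ℝ × (Fin (N-1) → ℝ), midN N p ^ 2 ≤ mid2 (T p) ^ 2 := by
      intro p
      have h1 : mid2 (T p) = (p.1 + selFun N p.2) / 2 := by
        simp only [mid2, hTdef, Prod.map, id]
        rw [aux_max_add_min]
      rw [h1]
      have := key_mid p.1 (⨆ i, p.2 i) (⨅ i, p.2 i) (hbdd p.2)
      simpa [midN, selFun] using this
    have hInt : Integrable (fun p => mid2 (T p) ^ 2)
        ((μ.prod ν).restrict (accN N η Δ)) := by
      refine Integrable.mono' (integrable_const (((2 * Δ + η * Δ) / 2) ^ 2))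
        ((hmid2m.comp hT).pow_const 2).aestronglyMeasurable ?_
      filter_upwards [ae_restrict_of_ae hG, ae_restrict_mem haccN] with p hp hmem
      have h1 : mid2 (T p) = (p.1 + selFun N p.2) / 2 := by
        simp only [mid2, hTdef, Prod.map, id]
        rw [aux_max_add_min]
      have hb := key_bound hΔ p.1 (⨆ i, p.2 i) (⨅ i, p.2 i) (selFun N p.2)
        hp.1.1 hp.1.2 (hselmem p.2).1 (hselmem p.2).2 hmem
      rw [Real.norm_eq_abs, abs_le]
      constructor
      · nlinarith [sq_nonneg (mid2 (T p)), sq_nonneg ((2 * Δ + η * Δ) / 2)]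
      · rw [h1]; exact hb
    exact integral_mono_of_nonneg (Filter.Eventually.of_forall fun p => sq_nonneg _)
      hInt (Filter.Eventually.of_forall hptwise)
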